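/- Soft-thresholding of singular values solves the nuclear-norm proximal problem: for any matrix A ∈ ℝ^{N×T} with singular value decomposition A = UΣV' and any τ > 0, the unique minimizer of (1/2)‖Θ − A‖_F² + τ‖Θ‖_nuc over Θ ∈ ℝ^{N×T} is S_τ(A) = U · diag(max{Σ_{rr} − τ, 0}) · V'. -/

import Mathlib

open Matrix BigOperators MeasureTheory ProbabilityTheory

/-- The singular values of a real matrix `A`, defined as the square roots of the
eigenvalues of `Aᴴ * A` (not sorted). -/
noncomputable def singularValues {N T : ℕ} (A : Matrix (Fin N) (Fin T) ℝ) : Fin T → ℝ :=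
  fun j => Real.sqrt ((by simpa using Matrix.isHermitian_conjTranspose_mul_self A : (Aᵀ * A).IsHermitian).eigenvalues j)

/-- The nuclear norm of a real matrix: the sum of its singular values. -/
noncomputable def nuclearNorm {N T : ℕ} (A : Matrix (Fin N) (Fin T) ℝ) : ℝ :=
  ∑ j, singularValues A j

/-- The Frobenius norm of a real matrix. -/
noncomputable def frobNorm {N T : ℕ} (A : Matrix (Fin N) (Fin T) ℝ) : ℝ :=
  Real.sqrt (∑ i, ∑ j, (A i j)^2)

/-- The operator (spectral) norm of a real matrix: its largest singular value. -/
noncomputable def opNorm {N T : ℕ} (A : Matrix (Fin N) (Fin T) ℝ) : ℝ :=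
  ⨆ j, singularValues A j

section Aux

open Polynomial

lemma charpoly_orth_conj {n : ℕ} (W B : Matrix (Fin n) (Fin n) ℝ) (hW : W * Wᵀ = 1) :
    (W * B * Wᵀ).charpoly = B.charpoly := by
  have hWC : (W.map C) * (Wᵀ.map C) = 1 := by
    rw [← Matrix.map_mul (f := (C : ℝ →+* ℝ[X])), hW, Matrix.map_one _ (map_zero _) (map_one _)]
  have h1 : charmatrix (W * B * Wᵀ) = (W.map C) * charmatrix B * (Wᵀ.map C) := by
    rw [charmatrix, charmatrix]
    rw [Matrix.mul_sub, Matrix.sub_mul]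
    congr 1
    · have : (diagonal fun _ : Fin n => X) = (X : ℝ[X]) • (1 : Matrix (Fin n) (Fin n) ℝ[X]) := by
        rw [smul_eq_diagonal_mul, Matrix.mul_one]
      rw [scalar_apply, this, Matrix.mul_smul, Matrix.mul_one, Matrix.smul_mul, hWC]
    · simp [RingHom.mapMatrix_apply, Matrix.map_mul]
  rw [Matrix.charpoly, h1, det_mul, det_mul, mul_comm ((W.map C).det), mul_assoc, ← det_mul, hWC,
    det_one, mul_one, Matrix.charpoly]

lemma charpoly_diag {n : ℕ} (e : Fin n → ℝ) :
    (Matrix.diagonal e).charpoly = (((Finset.univ : Finset (Fin n)).val.map e).map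
      (fun a => X - C a)).prod := by
  have h : charmatrix (Matrix.diagonal e) = Matrix.diagonal (fun i => X - C (e i)) := by
    ext i j
    by_cases hij : i = j
    · subst hij; simp [charmatrix_apply_eq]
    · simp [charmatrix_apply_ne _ _ _ hij, Matrix.diagonal_apply_ne _ hij]
  rw [Matrix.charpoly, h, det_diagonal, Finset.prod_eq_multiset_prod, Multiset.map_map]
  rfl

lemma multiset_eig {n : ℕ} {M : Matrix (Fin n) (Fin n) ℝ} (hM : M.IsHermitian)
    (W : Matrix (Fin n) (Fin n) ℝ) (d : Fin n → ℝ) (hW : W * Wᵀ = 1)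
    (h : M = W * Matrix.diagonal d * Wᵀ) :
    (Finset.univ : Finset (Fin n)).val.map hM.eigenvalues
      = (Finset.univ : Finset (Fin n)).val.map d := by
  have h1 : M.charpoly = (Matrix.diagonal d).charpoly := by
    rw [h]; exact charpoly_orth_conj W _ hW
  have hst : (star (hM.eigenvectorUnitary : Matrix (Fin n) (Fin n) ℝ))
      = (hM.eigenvectorUnitary : Matrix (Fin n) (Fin n) ℝ)ᵀ := by
    rw [Matrix.star_eq_conjTranspose, Matrix.conjTranspose_eq_transpose_of_trivial]
  have hWo : (hM.eigenvectorUnitary : Matrix (Fin n) (Fin n) ℝ)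
      * (hM.eigenvectorUnitary : Matrix (Fin n) (Fin n) ℝ)ᵀ = 1 := by
    rw [← hst]; exact (Matrix.mem_unitaryGroup_iff).mp hM.eigenvectorUnitary.2
  have h2 : M.charpoly = (Matrix.diagonal hM.eigenvalues).charpoly := by
    conv_lhs => rw [hM.spectral_theorem, Unitary.conjStarAlgAut_apply]
    rw [hst]
    have : (Matrix.diagonal (RCLike.ofReal ∘ hM.eigenvalues) : Matrix (Fin n) (Fin n) ℝ)
        = Matrix.diagonal hM.eigenvalues := by
      congr 1
    rw [this]
    exact charpoly_orth_conj _ _ hWo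
  have := congrArg Polynomial.roots (h2.symm.trans h1)
  rwa [charpoly_diag, charpoly_diag, roots_multiset_prod_X_sub_C,
    roots_multiset_prod_X_sub_C] at this

lemma sum_f_eig {n : ℕ} {M : Matrix (Fin n) (Fin n) ℝ} (hM : M.IsHermitian)
    (W : Matrix (Fin n) (Fin n) ℝ) (d : Fin n → ℝ) (hW : W * Wᵀ = 1)
    (h : M = W * Matrix.diagonal d * Wᵀ) (f : ℝ → ℝ) :
    ∑ j, f (hM.eigenvalues j) = ∑ j, f (d j) := by
  rw [Finset.sum_eq_multiset_sum, Finset.sum_eq_multiset_sum,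
    show (Finset.univ.val.map fun j => f (hM.eigenvalues j))
        = (Finset.univ.val.map hM.eigenvalues).map f from (Multiset.map_map f _ _).symm,
    show (Finset.univ.val.map fun j => f (d j))
        = (Finset.univ.val.map d).map f from (Multiset.map_map f _ _).symm,
    multiset_eig hM W d hW h]

lemma dot_mulVec_mulVec {N T : ℕ} (B D : Matrix (Fin N) (Fin T) ℝ) (u v : Fin T → ℝ) :
    (B *ᵥ u) ⬝ᵥ (D *ᵥ v) = u ⬝ᵥ ((Bᵀ * D) *ᵥ v) := by
  rw [Matrix.dotProduct_mulVec, Matrix.dotProduct_mulVec, ← Matrix.vecMul_vecMul,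
    Matrix.vecMul_transpose]

lemma dot_le_sqrt {n : ℕ} (a b : Fin n → ℝ) :
    a ⬝ᵥ b ≤ Real.sqrt (a ⬝ᵥ a) * Real.sqrt (b ⬝ᵥ b) := by
  have h := Real.sum_mul_le_sqrt_mul_sqrt Finset.univ a b
  simpa [dotProduct, sq] using h

lemma quad_form_entry {T : ℕ} (M W : Matrix (Fin T) (Fin T) ℝ) (j : Fin T) :
    (Wᵀ * M * W) j j = (fun i => W i j) ⬝ᵥ (M *ᵥ fun i => W i j) := by
  simp only [Matrix.mul_apply, mulVec, dotProduct, transpose_apply, Finset.sum_mul,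
    Finset.mul_sum]
  rw [Finset.sum_comm]
  exact Finset.sum_congr rfl fun a _ => Finset.sum_congr rfl fun b _ => by ring

/-- Key dual inequality: if `XᵀX ⪯ τ²·1` then `⟨X, Θ⟩ ≤ τ‖Θ‖₊`. -/
lemma dual_ineq {N T : ℕ} (X Θ : Matrix (Fin N) (Fin T) ℝ) (τ : ℝ) (hτ : 0 ≤ τ)
    (hX : ∀ c : Fin T → ℝ, c ⬝ᵥ ((Xᵀ * X) *ᵥ c) ≤ τ^2 * (c ⬝ᵥ c)) :
    ∑ i, ∑ j, X i j * Θ i j ≤ τ * nuclearNorm Θ := by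
  have hct : Θᴴ = Θᵀ := Matrix.conjTranspose_eq_transpose_of_trivial Θ
  set hH := Matrix.isHermitian_conjTranspose_mul_self Θ with hHdef
  set W : Matrix (Fin T) (Fin T) ℝ := (hH.eigenvectorUnitary : Matrix (Fin T) (Fin T) ℝ) with hWdef
  have hst : star W = Wᵀ := by
    rw [Matrix.star_eq_conjTranspose, Matrix.conjTranspose_eq_transpose_of_trivial]
  have hWWt : W * Wᵀ = 1 := by
    rw [← hst]; exact (Matrix.mem_unitaryGroup_iff).mp hH.eigenvectorUnitary.2
  have hWtW : Wᵀ * W = 1 := by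
    rw [← hst]; exact (Matrix.mem_unitaryGroup_iff').mp hH.eigenvectorUnitary.2
  have hdiagR : (Matrix.diagonal (RCLike.ofReal ∘ hH.eigenvalues) : Matrix (Fin T) (Fin T) ℝ)
      = Matrix.diagonal hH.eigenvalues := by congr 1
  have hHW : (Θᴴ * Θ) * W = W * Matrix.diagonal hH.eigenvalues := by
    conv_lhs => rw [hH.spectral_theorem, Unitary.conjStarAlgAut_apply]
    rw [hst, hdiagR, Matrix.mul_assoc, Matrix.mul_assoc, hWtW, Matrix.mul_one]
  set c : Fin T → Fin T → ℝ := fun j i => W i j with hc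
  have hcol : ∀ j, c j ⬝ᵥ c j = 1 := by
    intro j
    have := congrFun (congrFun hWtW j) j
    simpa [Matrix.mul_apply, dotProduct, Matrix.one_apply, c] using this
  have hHc : ∀ j, c j ⬝ᵥ ((Θᵀ * Θ) *ᵥ c j) = hH.eigenvalues j := by
    intro j
    have hmv : (Θᵀ * Θ) *ᵥ c j = hH.eigenvalues j • c j := by
      funext i
      have h2 : ∑ x, (Θᴴ * Θ) i x * W x j = W i j * hH.eigenvalues j := by
        rw [← Matrix.mul_apply, hHW, Matrix.mul_diagonal]
      rw [← hct]
      simp only [mulVec, dotProduct, c, Pi.smul_apply, smul_eq_mul]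
      rw [h2]; ring
    rw [hmv, dotProduct_smul, smul_eq_mul, hcol j, mul_one]
  have htr : ∑ i, ∑ j, X i j * Θ i j = ∑ j, (X *ᵥ c j) ⬝ᵥ (Θ *ᵥ c j) := by
    have h1 : ∀ j, (X *ᵥ c j) ⬝ᵥ (Θ *ᵥ c j) = (Wᵀ * (Xᵀ * Θ) * W) j j := by
      intro j
      rw [quad_form_entry, dot_mulVec_mulVec]
    calc ∑ i, ∑ j, X i j * Θ i j = Matrix.trace (Xᵀ * Θ) := by
          rw [Matrix.trace]
          rw [Finset.sum_comm]
          exact Finset.sum_congr rfl fun j _ => by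
            simp [Matrix.diag, Matrix.mul_apply, mul_comm]
      _ = Matrix.trace (Wᵀ * (Xᵀ * Θ) * W) := by
          rw [Matrix.trace_mul_cycle, ← Matrix.mul_assoc, hWWt, Matrix.one_mul]
      _ = ∑ j, (X *ᵥ c j) ⬝ᵥ (Θ *ᵥ c j) := by
          rw [Matrix.trace]
          exact Finset.sum_congr rfl fun j _ => (h1 j).symm
  rw [htr]
  have hbound : ∀ j, (X *ᵥ c j) ⬝ᵥ (Θ *ᵥ c j) ≤ τ * Real.sqrt (hH.eigenvalues j) := by
    intro j
    refine (dot_le_sqrt _ _).trans ?_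
    have hXc : Real.sqrt ((X *ᵥ c j) ⬝ᵥ (X *ᵥ c j)) ≤ τ := by
      rw [dot_mulVec_mulVec]
      calc Real.sqrt (c j ⬝ᵥ ((Xᵀ * X) *ᵥ c j)) ≤ Real.sqrt (τ^2 * (c j ⬝ᵥ c j)) :=
            Real.sqrt_le_sqrt (hX (c j))
        _ = τ := by rw [hcol j, mul_one, Real.sqrt_sq hτ]
    have hTc : Real.sqrt ((Θ *ᵥ c j) ⬝ᵥ (Θ *ᵥ c j)) = Real.sqrt (hH.eigenvalues j) := by
      rw [dot_mulVec_mulVec, hHc j]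
    rw [hTc]
    exact mul_le_mul_of_nonneg_right hXc (Real.sqrt_nonneg _)
  calc ∑ j, (X *ᵥ c j) ⬝ᵥ (Θ *ᵥ c j) ≤ ∑ j, τ * Real.sqrt (hH.eigenvalues j) :=
        Finset.sum_le_sum fun j _ => hbound j
    _ = τ * nuclearNorm Θ := by
        rw [nuclearNorm, Finset.mul_sum]
        exact Finset.sum_congr rfl fun j _ => rfl

lemma rectdiag_mul {N T : ℕ} (P Q : Matrix (Fin N) (Fin T) ℝ)
    (hP : ∀ (i : Fin N) (j : Fin T), (i:ℕ) ≠ (j:ℕ) → P i j = 0)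
    (hQ : ∀ (i : Fin N) (j : Fin T), (i:ℕ) ≠ (j:ℕ) → Q i j = 0) :
    Pᵀ * Q = Matrix.diagonal (fun j => ∑ i, P i j * Q i j) := by
  ext j j'
  by_cases hjj : j = j'
  · subst hjj
    simp [Matrix.mul_apply, Matrix.diagonal_apply_eq]
  · rw [Matrix.diagonal_apply_ne _ hjj, Matrix.mul_apply]
    apply Finset.sum_eq_zero
    intro i _
    rw [transpose_apply]
    by_cases hij : (i:ℕ) = (j:ℕ)
    · have h2 : (i:ℕ) ≠ (j':ℕ) := by
        rw [hij]; exact fun h => hjj (Fin.ext h)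
      rw [hQ i j' h2, mul_zero]
    · rw [hP i j hij, zero_mul]

lemma conj_transpose_mul_conj {N T : ℕ} (U : Matrix (Fin N) (Fin N) ℝ)
    (V : Matrix (Fin T) (Fin T) ℝ) (hU₁ : Uᵀ * U = 1)
    (P Q : Matrix (Fin N) (Fin T) ℝ) :
    (U * P * Vᵀ)ᵀ * (U * Q * Vᵀ) = V * (Pᵀ * Q) * Vᵀ := by
  rw [Matrix.transpose_mul, Matrix.transpose_mul, Matrix.transpose_transpose]
  have h : Uᵀ * (U * (Q * Vᵀ)) = Q * Vᵀ := by rw [← Matrix.mul_assoc, hU₁, Matrix.one_mul]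
  simp only [Matrix.mul_assoc]
  rw [h]

lemma ip_trace {N T : ℕ} (M P : Matrix (Fin N) (Fin T) ℝ) :
    ∑ i, ∑ j, M i j * P i j = Matrix.trace (Mᵀ * P) := by
  rw [Matrix.trace, Finset.sum_comm]
  exact Finset.sum_congr rfl fun j _ => by simp [Matrix.diag, Matrix.mul_apply]

lemma ip_conj {N T : ℕ} (U : Matrix (Fin N) (Fin N) ℝ) (V : Matrix (Fin T) (Fin T) ℝ)
    (hU₁ : Uᵀ * U = 1) (hV₁ : Vᵀ * V = 1)
    (P Q : Matrix (Fin N) (Fin T) ℝ) :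
    ∑ i, ∑ j, (U * P * Vᵀ) i j * (U * Q * Vᵀ) i j = ∑ i, ∑ j, P i j * Q i j := by
  rw [ip_trace, ip_trace, conj_transpose_mul_conj U V hU₁,
    Matrix.trace_mul_cycle, hV₁, Matrix.one_mul]

end Aux

/-- Singular-value soft-thresholding solves the nuclear-norm
proximal problem: if `A = U Σ Vᵀ` is an SVD, then
`S_τ(A) = U max(Σ − τ, 0) Vᵀ` is the unique minimizer of
`(1/2)‖Θ − A‖_F² + τ‖Θ‖_nuc`. -/
theorem soft_thresholding_prox {N T : ℕ}
    (A : Matrix (Fin N) (Fin T) ℝ) (τ : ℝ) (hτ : 0 < τ)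
    (U : Matrix (Fin N) (Fin N) ℝ) (V : Matrix (Fin T) (Fin T) ℝ)
    (hU₁ : Uᵀ * U = 1) (hU₂ : U * Uᵀ = 1) (hV₁ : Vᵀ * V = 1) (hV₂ : V * Vᵀ = 1)
    (Sg : Matrix (Fin N) (Fin T) ℝ)
    (hdiag : ∀ (i : Fin N) (j : Fin T), (i : ℕ) ≠ (j : ℕ) → Sg i j = 0)
    (hnonneg : ∀ i j, 0 ≤ Sg i j)
    (hA : A = U * Sg * Vᵀ) :
    (∀ Θ : Matrix (Fin N) (Fin T) ℝ,
        (1/2) * (∑ i, ∑ j,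
            ((U * (Matrix.of fun (i : Fin N) (j : Fin T) => if (i:ℕ) = (j:ℕ) then max (Sg i j - τ) 0 else 0) * Vᵀ) i j
              - A i j)^2)
          + τ * nuclearNorm (U * (Matrix.of fun (i : Fin N) (j : Fin T) => if (i:ℕ) = (j:ℕ) then max (Sg i j - τ) 0 else 0) * Vᵀ)
        ≤ (1/2) * (∑ i, ∑ j, (Θ i j - A i j)^2) + τ * nuclearNorm Θ) ∧
    (∀ Θ : Matrix (Fin N) (Fin T) ℝ,
        (1/2) * (∑ i, ∑ j, (Θ i j - A i j)^2) + τ * nuclearNorm Θ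
          = (1/2) * (∑ i, ∑ j,
              ((U * (Matrix.of fun (i : Fin N) (j : Fin T) => if (i:ℕ) = (j:ℕ) then max (Sg i j - τ) 0 else 0) * Vᵀ) i j
                - A i j)^2)
            + τ * nuclearNorm (U * (Matrix.of fun (i : Fin N) (j : Fin T) => if (i:ℕ) = (j:ℕ) then max (Sg i j - τ) 0 else 0) * Vᵀ)
          → Θ = U * (Matrix.of fun (i : Fin N) (j : Fin T) => if (i:ℕ) = (j:ℕ) then max (Sg i j - τ) 0 else 0) * Vᵀ) := by
  set D : Matrix (Fin N) (Fin T) ℝ :=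
    Matrix.of fun (i : Fin N) (j : Fin T) => if (i:ℕ) = (j:ℕ) then max (Sg i j - τ) 0 else 0
    with hD
  set S : Matrix (Fin N) (Fin T) ℝ := U * D * Vᵀ with hSdef
  set E : Matrix (Fin N) (Fin T) ℝ := Sg - D with hE
  -- basic entry facts
  have hDoff : ∀ (i : Fin N) (j : Fin T), (i:ℕ) ≠ (j:ℕ) → D i j = 0 := by
    intro i j h; simp [hD, h]
  have hEoff : ∀ (i : Fin N) (j : Fin T), (i:ℕ) ≠ (j:ℕ) → E i j = 0 := by
    intro i j h; simp [hE, hD, h, hdiag i j h]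
  have hDnn : ∀ i j, 0 ≤ D i j := by
    intro i j
    by_cases h : (i:ℕ) = (j:ℕ) <;> simp [hD, h, le_max_right]
  have hErange : ∀ i j, 0 ≤ E i j ∧ E i j ≤ τ := by
    intro i j
    by_cases h : (i:ℕ) = (j:ℕ)
    · have h1 := hnonneg i j
      simp only [hE, hD, Matrix.sub_apply, Matrix.of_apply, if_pos h]
      constructor
      · have : max (Sg i j - τ) 0 ≤ Sg i j := max_le (by linarith) h1
        linarith
      · have : Sg i j - τ ≤ max (Sg i j - τ) 0 := le_max_left _ _
        linarith
    · rw [hEoff i j h]; exact ⟨le_refl 0, hτ.le⟩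
  -- the key per-column identity
  have hkey : ∀ j : Fin T, ∑ i, E i j * D i j = τ * Real.sqrt (∑ i, D i j * D i j) := by
    intro j
    by_cases hjN : (j:ℕ) < N
    · set i₀ : Fin N := ⟨(j:ℕ), hjN⟩ with hi₀
      have hiv : (i₀:ℕ) = (j:ℕ) := rfl
      have hz : ∀ i : Fin N, i ≠ i₀ → D i j = 0 := by
        intro i hi
        apply hDoff
        intro hc
        exact hi (Fin.ext (by rw [hc, ← hiv]))
      have h1 : ∑ i, E i j * D i j = E i₀ j * D i₀ j :=
        Finset.sum_eq_single i₀ (fun i _ hi => by rw [hz i hi, mul_zero])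
          (fun h => absurd (Finset.mem_univ i₀) h)
      have h2 : ∑ i, D i j * D i j = D i₀ j * D i₀ j :=
        Finset.sum_eq_single i₀ (fun i _ hi => by rw [hz i hi, mul_zero])
          (fun h => absurd (Finset.mem_univ i₀) h)
      rw [h1, h2, Real.sqrt_mul_self (hDnn i₀ j)]
      have hDv : D i₀ j = max (Sg i₀ j - τ) 0 := by simp [hD, hiv]
      have hEv : E i₀ j = Sg i₀ j - max (Sg i₀ j - τ) 0 := by
        simp [hE, hD, hiv]
      rw [hDv, hEv]
      rcases le_total (Sg i₀ j) τ with h | h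
      · rw [max_eq_right (by linarith)]; ring
      · rw [max_eq_left (by linarith)]; ring
    · have hz : ∀ i : Fin N, D i j = 0 := by
        intro i
        apply hDoff
        intro hc
        exact hjN (hc ▸ i.isLt)
      have h1 : ∑ i, E i j * D i j = 0 :=
        Finset.sum_eq_zero fun i _ => by rw [hz i, mul_zero]
      have h2 : ∑ i, D i j * D i j = 0 :=
        Finset.sum_eq_zero fun i _ => by rw [hz i, mul_zero]
      rw [h1, h2, Real.sqrt_zero, mul_zero]
  -- nuclear norm of S
  have hStS : Sᴴ * S = V * Matrix.diagonal (fun j => ∑ i, D i j * D i j) * Vᵀ := by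
    rw [Matrix.conjTranspose_eq_transpose_of_trivial, hSdef,
      conj_transpose_mul_conj U V hU₁, rectdiag_mul D D hDoff hDoff]
  have hNS : nuclearNorm S = ∑ j, Real.sqrt (∑ i, D i j * D i j) := by
    simp only [nuclearNorm, singularValues]
    exact sum_f_eig (Matrix.isHermitian_conjTranspose_mul_self S) V _ hV₂ hStS Real.sqrt
  -- A - S
  have hAS : A - S = U * E * Vᵀ := by
    rw [hA, hSdef, hE, Matrix.mul_sub U Sg D, Matrix.sub_mul]
  -- ⟨A - S, S⟩ = τ ‖S‖₊
  have hXS : ∑ i, ∑ j, (A - S) i j * S i j = τ * nuclearNorm S := by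
    rw [hAS, hSdef, ip_conj U V hU₁ hV₁ E D, hNS, Finset.mul_sum, Finset.sum_comm]
    exact Finset.sum_congr rfl fun j _ => hkey j
  -- operator norm bound for A - S
  have hXbound : ∀ c : Fin T → ℝ,
      c ⬝ᵥ (((A - S)ᵀ * (A - S)) *ᵥ c) ≤ τ^2 * (c ⬝ᵥ c) := by
    intro c
    have hXtX : (A - S)ᵀ * (A - S)
        = V * Matrix.diagonal (fun j => ∑ i, E i j * E i j) * Vᵀ := by
      rw [hAS, conj_transpose_mul_conj U V hU₁, rectdiag_mul E E hEoff hEoff]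
    have hej : ∀ j, (∑ i, E i j * E i j) ≤ τ^2 := by
      intro j
      by_cases hjN : (j:ℕ) < N
      · set i₀ : Fin N := ⟨(j:ℕ), hjN⟩ with hi₀
        have hz : ∀ i : Fin N, i ≠ i₀ → E i j = 0 := by
          intro i hi
          apply hEoff
          intro hc
          exact hi (Fin.ext hc)
        have h2 : ∑ i, E i j * E i j = E i₀ j * E i₀ j :=
          Finset.sum_eq_single i₀ (fun i _ hi => by rw [hz i hi, mul_zero])
            (fun h => absurd (Finset.mem_univ i₀) h)
        rw [h2]
        obtain ⟨h0, h1⟩ := hErange i₀ j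
        nlinarith
      · have hz : ∀ i : Fin N, E i j = 0 := fun i =>
          hEoff i j (fun hc => hjN (hc ▸ i.isLt))
        rw [Finset.sum_eq_zero fun i _ => by rw [hz i, mul_zero]]
        positivity
    rw [hXtX]
    have hmv : (V * Matrix.diagonal (fun j => ∑ i, E i j * E i j) * Vᵀ) *ᵥ c
        = V *ᵥ (Matrix.diagonal (fun j => ∑ i, E i j * E i j) *ᵥ (Vᵀ *ᵥ c)) := by
      rw [← Matrix.mulVec_mulVec, ← Matrix.mulVec_mulVec]
    rw [hmv, Matrix.dotProduct_mulVec c V, ← Matrix.mulVec_transpose]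
    set u : Fin T → ℝ := Vᵀ *ᵥ c with hu
    have huu : u ⬝ᵥ u = c ⬝ᵥ c := by
      rw [hu, dot_mulVec_mulVec, Matrix.transpose_transpose, hV₂, Matrix.one_mulVec]
    calc u ⬝ᵥ (Matrix.diagonal (fun j => ∑ i, E i j * E i j) *ᵥ u)
        = ∑ j, u j * ((∑ i, E i j * E i j) * u j) := by
          simp [dotProduct, Matrix.mulVec_diagonal]
      _ ≤ ∑ j, τ^2 * (u j * u j) := by
          apply Finset.sum_le_sum
          intro j _
          have := hej j
          have hsq : 0 ≤ ∑ i, E i j * E i j :=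
            Finset.sum_nonneg fun i _ => mul_self_nonneg _
          nlinarith [mul_self_nonneg (u j)]
      _ = τ^2 * (u ⬝ᵥ u) := by rw [dotProduct, Finset.mul_sum]
      _ = τ^2 * (c ⬝ᵥ c) := by rw [huu]
  -- dual inequality
  have hdual : ∀ Θ : Matrix (Fin N) (Fin T) ℝ,
      ∑ i, ∑ j, (A - S) i j * Θ i j ≤ τ * nuclearNorm Θ :=
    fun Θ => dual_ineq (A - S) Θ τ hτ.le hXbound
  -- master inequality
  have hmaster : ∀ Θ : Matrix (Fin N) (Fin T) ℝ,
      (1/2) * (∑ i, ∑ j, (S i j - A i j)^2) + τ * nuclearNorm S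
        + (1/2) * (∑ i, ∑ j, (Θ i j - S i j)^2)
      ≤ (1/2) * (∑ i, ∑ j, (Θ i j - A i j)^2) + τ * nuclearNorm Θ := by
    intro Θ
    have hsplit : ∑ i, ∑ j, (Θ i j - A i j)^2
        = (∑ i, ∑ j, (Θ i j - S i j)^2) + (∑ i, ∑ j, (S i j - A i j)^2)
          - 2 * (∑ i, ∑ j, (A - S) i j * Θ i j)
          + 2 * (∑ i, ∑ j, (A - S) i j * S i j) := by
      simp only [Matrix.sub_apply]
      rw [← Finset.sum_add_distrib]
      rw [Finset.mul_sum, Finset.mul_sum, ← Finset.sum_sub_distrib, ← Finset.sum_add_distrib]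
      apply Finset.sum_congr rfl
      intro i _
      rw [← Finset.sum_add_distrib]
      rw [Finset.mul_sum, Finset.mul_sum, ← Finset.sum_sub_distrib, ← Finset.sum_add_distrib]
      apply Finset.sum_congr rfl
      intro j _
      ring
    have h1 := hdual Θ
    have h2 := hXS
    linarith [hsplit]
  constructor
  · intro Θ
    have h := hmaster Θ
    have hnn : 0 ≤ ∑ i, ∑ j, (Θ i j - S i j)^2 :=
      Finset.sum_nonneg fun i _ => Finset.sum_nonneg fun j _ => sq_nonneg _
    calc (1/2) * (∑ i, ∑ j, (S i j - A i j)^2) + τ * nuclearNorm S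
        ≤ (1/2) * (∑ i, ∑ j, (S i j - A i j)^2) + τ * nuclearNorm S
          + (1/2) * (∑ i, ∑ j, (Θ i j - S i j)^2) := by linarith
      _ ≤ (1/2) * (∑ i, ∑ j, (Θ i j - A i j)^2) + τ * nuclearNorm Θ := h
  · intro Θ heq
    have h := hmaster Θ
    rw [heq] at h
    have hle : ∑ i, ∑ j, (Θ i j - S i j)^2 ≤ 0 := by linarith
    have hnn : ∀ i ∈ Finset.univ, (0:ℝ) ≤ ∑ j, (Θ i j - S i j)^2 :=
      fun i _ => Finset.sum_nonneg fun j _ => sq_nonneg _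
    have hzero : ∑ i, ∑ j, (Θ i j - S i j)^2 = 0 :=
      le_antisymm hle (Finset.sum_nonneg hnn)
    ext i j
    have hi := (Finset.sum_eq_zero_iff_of_nonneg hnn).mp hzero i (Finset.mem_univ i)
    have hj := (Finset.sum_eq_zero_iff_of_nonneg
      (fun j _ => sq_nonneg (Θ i j - S i j))).mp hi j (Finset.mem_univ j)
    have := pow_eq_zero_iff (n := 2) (by norm_num) |>.mp hj
    linarith [sub_eq_zero.mp this]
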